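/- For a fixed real number k with −1 < k < 0 and coprime positive integers m, n, we have π_k(x; m, n) − π(x^{k+1}; m, n) = O(x^{k+1} exp(−(α/2)√((k+1) log x))) as x → ∞, where α is the positive constant from the prime number theorem for arithmetic progressions. -/

import Mathlib

open Real Filter Finset

/-- The finset of primes `p ≤ x` with `p ≡ n (mod m)`. -/
noncomputable def primesTo (x : ℝ) (m n : ℕ) : Finset ℕ :=
  (Finset.range (⌊x⌋₊ + 1)).filter fun p => p.Prime ∧ p % m = n % m

/-- `π(x; m, n)`, the number of primes `p ≤ x` with `p ≡ n (mod m)`. -/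
noncomputable def piCount (x : ℝ) (m n : ℕ) : ℝ := (primesTo x m n).card

/-- `π_k(x; m, n) = Σ_{p ≤ x, p ≡ n (mod m)} p^k`. -/
noncomputable def piPow (k x : ℝ) (m n : ℕ) : ℝ :=
  ∑ p ∈ primesTo x m n, (p : ℝ) ^ k

section aux
variable (m n : ℕ)

/-- the indicator sequence -/
noncomputable def cseq (m n j : ℕ) : ℝ := if j.Prime ∧ j % m = n % m then 1 else 0

lemma cseq_zero : cseq m n 0 = 0 := by simp [cseq, Nat.not_prime_zero]

lemma range_succ_eq_Icc (N : ℕ) : Finset.range (N + 1) = Finset.Icc 0 N := by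
  ext j; simp [Nat.lt_succ_iff]

lemma sum_cseq (t : ℝ) : ∑ j ∈ Finset.Icc 0 ⌊t⌋₊, cseq m n j = piCount t m n := by
  classical
  rw [piCount, primesTo, Finset.card_filter, ← range_succ_eq_Icc]
  push_cast
  simp [cseq]

lemma piCount_mono : Monotone (fun t : ℝ => piCount t m n) := by
  intro s t hst
  have : primesTo s m n ⊆ primesTo t m n :=
    Finset.filter_subset_filter _ (Finset.range_subset_range.mpr (by
      have := Nat.floor_le_floor hst; omega))
  simpa [piCount] using Finset.card_le_card this

lemma piCount_nonneg (t : ℝ) : 0 ≤ piCount t m n := Nat.cast_nonneg _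

lemma piPow_eq_sum (k b : ℝ) : piPow k b m n = ∑ j ∈ Finset.Icc 0 ⌊b⌋₊, (j : ℝ) ^ k * cseq m n j := by
  classical
  rw [piPow, primesTo, ← range_succ_eq_Icc]
  rw [Finset.sum_filter]
  refine Finset.sum_congr rfl fun j _ => ?_
  by_cases h : j.Prime ∧ j % m = n % m <;> simp [cseq, h]

/-- Abel summation applied to our situation. -/
lemma abel_id (k : ℝ) (hk : k < 0) (b : ℝ) (hb : 1 ≤ b) :
    piPow k b m n = b ^ k * piCount b m n
      - ∫ t in (1:ℝ)..b, (k * t ^ (k - 1)) * piCount t m n := by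
  have hd : ∀ t ∈ Set.Icc (1:ℝ) b, DifferentiableAt ℝ (fun t : ℝ => t ^ k) t := by
    intro t ht
    exact (Real.hasDerivAt_rpow_const (Or.inl (by nlinarith [ht.1] : t ≠ 0))).differentiableAt
  have hcg : ContinuousOn (fun t : ℝ => k * t ^ (k - 1)) (Set.Icc 1 b) := by
    refine continuousOn_const.mul ?_
    intro t ht
    exact (Real.continuousAt_rpow_const t (k - 1) (Or.inl (by nlinarith [ht.1]))).continuousWithinAt
  have hint : MeasureTheory.IntegrableOn (deriv fun t : ℝ => t ^ k) (Set.Icc 1 b) := by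
    refine (hcg.integrableOn_compact isCompact_Icc).congr_fun ?_ measurableSet_Icc
    intro t ht
    exact (Real.deriv_rpow_const t k).symm
  have h := sum_mul_eq_sub_integral_mul₀ (cseq m n) (cseq_zero m n) b hd hint
  rw [sum_cseq] at h
  have h2 : piPow k b m n = ∑ j ∈ Finset.Icc 0 ⌊b⌋₊, (fun t : ℝ => t ^ k) ↑j * cseq m n j :=
    piPow_eq_sum m n k b
  rw [← h2] at h
  rw [h]
  congr 1
  rw [intervalIntegral.integral_of_le hb]
  refine MeasureTheory.setIntegral_congr_fun measurableSet_Ioc fun t ht => ?_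
  rw [sum_cseq, Real.deriv_rpow_const t k]


noncomputable def Mint (t : ℝ) : ℝ := ∫ u in (2:ℝ)..t, 1 / Real.log u

lemma invlog_contAt {t : ℝ} (ht : 1 < t) : ContinuousAt (fun u : ℝ => 1 / Real.log u) t := by
  have h0 : t ≠ 0 := by linarith
  exact (continuousAt_const.div (Real.continuousAt_log h0) (ne_of_gt (Real.log_pos ht)))

lemma invlog_contOn {a b : ℝ} (ha : 1 < a) :
    ContinuousOn (fun u : ℝ => 1 / Real.log u) (Set.Icc a b) := fun t ht =>
  (invlog_contAt (lt_of_lt_of_le ha ht.1)).continuousWithinAt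

lemma invlog_intble {b : ℝ} (hb : 2 ≤ b) :
    IntervalIntegrable (fun u : ℝ => 1 / Real.log u) MeasureTheory.volume 2 b := by
  refine ContinuousOn.intervalIntegrable ?_
  rw [Set.uIcc_of_le hb]
  exact invlog_contOn one_lt_two

lemma M_hasDeriv {t : ℝ} (ht : 2 ≤ t) : HasDerivAt Mint (1 / Real.log t) t := by
  refine intervalIntegral.integral_hasDerivAt_right (invlog_intble ht) ?_ (invlog_contAt (by linarith))
  exact ContinuousAt.stronglyMeasurableAtFilter isOpen_Ioi
    (fun u hu => invlog_contAt hu) t (by simpa using by linarith : t ∈ Set.Ioi (1:ℝ))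

lemma M_contOn {a b : ℝ} (ha : 2 ≤ a) : ContinuousOn Mint (Set.Icc a b) := fun t ht =>
  ((M_hasDeriv (le_trans ha ht.1)).continuousAt).continuousWithinAt

section kfix
variable {k : ℝ} (hk₁ : -1 < k) (hk₂ : k < 0)

include hk₁ hk₂

lemma ibp (x : ℝ) (hx : 2 ≤ x) :
    ∫ t in (2:ℝ)..x, (k * t ^ (k - 1)) * Mint t
      = x ^ k * Mint x - ∫ t in (2:ℝ)..x, t ^ k * (1 / Real.log t) := by
  have hcont1 : ContinuousOn (fun t : ℝ => (k * t ^ (k - 1)) * Mint t) (Set.Icc 2 x) := by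
    refine ContinuousOn.mul (continuousOn_const.mul ?_) (M_contOn le_rfl)
    exact fun t ht => (Real.continuousAt_rpow_const t (k - 1)
      (Or.inl (by nlinarith [ht.1]))).continuousWithinAt
  have hcont2 : ContinuousOn (fun t : ℝ => t ^ k * (1 / Real.log t)) (Set.Icc 2 x) := by
    refine ContinuousOn.mul ?_ (invlog_contOn one_lt_two)
    exact fun t ht => (Real.continuousAt_rpow_const t k
      (Or.inl (by nlinarith [ht.1]))).continuousWithinAt
  have hint1 : IntervalIntegrable (fun t : ℝ => (k * t ^ (k - 1)) * Mint t)
      MeasureTheory.volume 2 x := by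
    refine ContinuousOn.intervalIntegrable ?_; rwa [Set.uIcc_of_le hx]
  have hint2 : IntervalIntegrable (fun t : ℝ => t ^ k * (1 / Real.log t))
      MeasureTheory.volume 2 x := by
    refine ContinuousOn.intervalIntegrable ?_; rwa [Set.uIcc_of_le hx]
  have hder : ∀ t ∈ Set.uIcc (2:ℝ) x, HasDerivAt (fun t : ℝ => t ^ k * Mint t)
      ((k * t ^ (k - 1)) * Mint t + t ^ k * (1 / Real.log t)) t := by
    intro t ht
    rw [Set.uIcc_of_le hx] at ht
    exact (Real.hasDerivAt_rpow_const (Or.inl (by nlinarith [ht.1] : t ≠ 0))).mul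
      (M_hasDeriv ht.1)
  have h := intervalIntegral.integral_eq_sub_of_hasDerivAt hder (hint1.add hint2)
  rw [intervalIntegral.integral_add hint1 hint2] at h
  have hM2 : Mint 2 = 0 := intervalIntegral.integral_same
  rw [hM2, mul_zero, sub_zero] at h
  linarith

lemma a0_pos : (0:ℝ) < (2:ℝ) ^ ((1:ℝ)/(k+1)) := Real.rpow_pos_of_pos two_pos _

lemma two_lt_a0 : (2:ℝ) < (2:ℝ) ^ ((1:ℝ)/(k+1)) := by
  have h1 : (1:ℝ) < 1/(k+1) := by
    rw [lt_div_iff₀ (by linarith)]; nlinarith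
  calc (2:ℝ) = (2:ℝ) ^ (1:ℝ) := (Real.rpow_one 2).symm
    _ < (2:ℝ) ^ ((1:ℝ)/(k+1)) := Real.rpow_lt_rpow_of_exponent_lt one_lt_two h1

lemma a0_pow : ((2:ℝ) ^ ((1:ℝ)/(k+1))) ^ (k+1) = 2 := by
  rw [← Real.rpow_mul (by norm_num : (0:ℝ) ≤ 2), one_div_mul_cancel (by linarith : k+1 ≠ 0),
    Real.rpow_one]

lemma cov (x : ℝ) (hx : (2:ℝ) ^ ((1:ℝ)/(k+1)) ≤ x) :
    ∫ t in ((2:ℝ) ^ ((1:ℝ)/(k+1)))..x, t ^ k * (1 / Real.log t) = Mint (x ^ (k+1)) := by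
  set a₀ := (2:ℝ) ^ ((1:ℝ)/(k+1)) with ha₀
  have h2a : (2:ℝ) < a₀ := two_lt_a0 hk₁ hk₂
  have hder : ∀ t ∈ Set.uIcc a₀ x, HasDerivAt (fun t : ℝ => Mint (t ^ (k+1)))
      (t ^ k * (1 / Real.log t)) t := by
    intro t ht
    rw [Set.uIcc_of_le hx] at ht
    have ht0 : (0:ℝ) < t := by linarith [ht.1]
    have hg : HasDerivAt (fun t : ℝ => t ^ (k+1)) ((k+1) * t ^ k) t := by
      have := Real.hasDerivAt_rpow_const (p := k+1) (Or.inl (ne_of_gt ht0))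
      simpa using this
    have h2t : (2:ℝ) ≤ t ^ (k+1) := by
      calc (2:ℝ) = a₀ ^ (k+1) := (a0_pow hk₁ hk₂).symm
        _ ≤ t ^ (k+1) := Real.rpow_le_rpow (le_of_lt (a0_pos hk₁ hk₂)) ht.1 (by linarith)
    have hM := M_hasDeriv h2t
    have hcomp := HasDerivAt.comp t hM hg
    have hlog : Real.log (t ^ (k+1)) = (k+1) * Real.log t := Real.log_rpow ht0 _
    have hlt : (1:ℝ) < t := by linarith [ht.1]
    have hlogt : Real.log t ≠ 0 := ne_of_gt (Real.log_pos hlt)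
    have : 1 / Real.log (t ^ (k+1)) * ((k+1) * t ^ k) = t ^ k * (1 / Real.log t) := by
      have hk0 : k + 1 ≠ 0 := by linarith
      rw [hlog]; field_simp
    rw [this] at hcomp
    exact hcomp
  have hint : IntervalIntegrable (fun t : ℝ => t ^ k * (1 / Real.log t))
      MeasureTheory.volume a₀ x := by
    refine ContinuousOn.intervalIntegrable ?_
    rw [Set.uIcc_of_le hx]
    refine ContinuousOn.mul ?_ (invlog_contOn (by linarith))
    exact fun t ht => (Real.continuousAt_rpow_const t k
      (Or.inl (by nlinarith [ht.1]))).continuousWithinAt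
  have h := intervalIntegral.integral_eq_sub_of_hasDerivAt hder hint
  rw [h, a0_pow hk₁ hk₂]
  have hM2 : Mint 2 = 0 := intervalIntegral.integral_same
  rw [hM2, sub_zero]


lemma fP_intble (m n : ℕ) {a b : ℝ} (ha : 1 ≤ a) (hab : a ≤ b) :
    IntervalIntegrable (fun t : ℝ => (k * t ^ (k - 1)) * piCount t m n)
      MeasureTheory.volume a b := by
  rw [intervalIntegrable_iff_integrableOn_Ioc_of_le hab]
  have hP : MeasureTheory.IntegrableOn (fun t : ℝ => piCount t m n) (Set.Ioc a b) :=
    (((piCount_mono m n).monotoneOn _).integrableOn_isCompact (isCompact_Icc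
      (a := a) (b := b))).mono_set Set.Ioc_subset_Icc_self
  refine MeasureTheory.Integrable.bdd_mul (c := |k| * a ^ (k - 1)) hP ?_ ?_
  · refine ContinuousOn.aestronglyMeasurable ?_ measurableSet_Ioc
    refine continuousOn_const.mul ?_
    exact fun t ht => (Real.continuousAt_rpow_const t (k - 1)
      (Or.inl (by nlinarith [ht.1]))).continuousWithinAt
  · rw [MeasureTheory.ae_restrict_iff' measurableSet_Ioc]
    refine MeasureTheory.ae_of_all _ fun t ht => ?_
    have ht0 : 0 < t := by linarith [ht.1]
    rw [norm_mul, Real.norm_eq_abs, Real.norm_eq_abs,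
      abs_of_nonneg (Real.rpow_nonneg (le_of_lt ht0) _)]
    have : t ^ (k - 1) ≤ a ^ (k - 1) :=
      Real.rpow_le_rpow_of_nonpos (by linarith) (le_of_lt ht.1) (by linarith)
    exact mul_le_mul_of_nonneg_left this (abs_nonneg k)

noncomputable def Efun (m n : ℕ) (r t : ℝ) : ℝ := piCount t m n - r * Mint t

lemma fM_intble (r : ℝ) {a b : ℝ} (ha : 2 ≤ a) (hab : a ≤ b) :
    IntervalIntegrable (fun t : ℝ => (k * t ^ (k - 1)) * (r * Mint t))
      MeasureTheory.volume a b := by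
  refine ContinuousOn.intervalIntegrable ?_
  rw [Set.uIcc_of_le hab]
  refine ContinuousOn.mul (continuousOn_const.mul ?_) (continuousOn_const.mul (M_contOn ha))
  exact fun t ht => (Real.continuousAt_rpow_const t (k - 1)
    (Or.inl (by nlinarith [ht.1]))).continuousWithinAt

lemma fE_intble (m n : ℕ) (r : ℝ) {a b : ℝ} (ha : 2 ≤ a) (hab : a ≤ b) :
    IntervalIntegrable (fun t : ℝ => (k * t ^ (k - 1)) * Efun m n r t)
      MeasureTheory.volume a b := by
  have : (fun t : ℝ => (k * t ^ (k - 1)) * Efun m n r t)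
      = fun t : ℝ => (k * t ^ (k - 1)) * piCount t m n - (k * t ^ (k - 1)) * (r * Mint t) := by
    funext t; simp [Efun]; ring
  rw [this]
  exact (fP_intble hk₁ hk₂ m n (by linarith) hab).sub (fM_intble hk₁ hk₂ r ha hab)

lemma tk_intble {a b : ℝ} (ha : 1 < a) (hab : a ≤ b) :
    IntervalIntegrable (fun t : ℝ => t ^ k * (1 / Real.log t)) MeasureTheory.volume a b := by
  refine ContinuousOn.intervalIntegrable ?_
  rw [Set.uIcc_of_le hab]
  refine ContinuousOn.mul ?_ (invlog_contOn ha)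
  exact fun t ht => (Real.continuousAt_rpow_const t k
    (Or.inl (by nlinarith [ht.1]))).continuousWithinAt

lemma main_id (m n : ℕ) (r : ℝ) (x : ℝ) (hx : (2:ℝ) ^ ((1:ℝ)/(k+1)) ≤ x) :
    piPow k x m n - piCount (x ^ (k+1)) m n
      = x ^ k * Efun m n r x - (∫ t in (2:ℝ)..x, (k * t ^ (k - 1)) * Efun m n r t)
        - Efun m n r (x ^ (k+1))
        - (∫ t in (1:ℝ)..2, (k * t ^ (k - 1)) * piCount t m n)
        + r * (∫ t in (2:ℝ)..((2:ℝ) ^ ((1:ℝ)/(k+1))), t ^ k * (1 / Real.log t)) := by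
  set a₀ := (2:ℝ) ^ ((1:ℝ)/(k+1)) with ha₀
  have h2a : (2:ℝ) < a₀ := two_lt_a0 hk₁ hk₂
  have hx2 : (2:ℝ) ≤ x := by linarith
  have hx1 : (1:ℝ) ≤ x := by linarith
  -- Abel
  have habel := abel_id m n k hk₂ x hx1
  -- split the integral at 2
  have hsplit : (∫ t in (1:ℝ)..x, (k * t ^ (k - 1)) * piCount t m n)
      = (∫ t in (1:ℝ)..2, (k * t ^ (k - 1)) * piCount t m n)
        + ∫ t in (2:ℝ)..x, (k * t ^ (k - 1)) * piCount t m n :=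
    (intervalIntegral.integral_add_adjacent_intervals
      (fP_intble hk₁ hk₂ m n le_rfl one_le_two) (fP_intble hk₁ hk₂ m n one_le_two hx2)).symm
  -- decompose piCount = Efun + r * Mint inside the integral
  have hdecomp : (∫ t in (2:ℝ)..x, (k * t ^ (k - 1)) * piCount t m n)
      = (∫ t in (2:ℝ)..x, (k * t ^ (k - 1)) * Efun m n r t)
        + ∫ t in (2:ℝ)..x, (k * t ^ (k - 1)) * (r * Mint t) := by
    rw [← intervalIntegral.integral_add (fE_intble hk₁ hk₂ m n r le_rfl hx2)
      (fM_intble hk₁ hk₂ r le_rfl hx2)]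
    refine intervalIntegral.integral_congr fun t _ => ?_
    simp [Efun]; ring
  -- pull out r and apply ibp
  have hpull : (∫ t in (2:ℝ)..x, (k * t ^ (k - 1)) * (r * Mint t))
      = r * ∫ t in (2:ℝ)..x, (k * t ^ (k - 1)) * Mint t := by
    rw [← intervalIntegral.integral_const_mul]
    refine intervalIntegral.integral_congr fun t _ => ?_
    ring
  have hibp := ibp hk₁ hk₂ x hx2
  -- change of variables
  have hcov := cov hk₁ hk₂ x hx
  have hS : (∫ t in (2:ℝ)..x, t ^ k * (1 / Real.log t))
      = Mint (x ^ (k+1)) + ∫ t in (2:ℝ)..a₀, t ^ k * (1 / Real.log t) := by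
    have h1 : (∫ t in a₀..(2:ℝ), t ^ k * (1 / Real.log t))
        + ∫ t in (2:ℝ)..x, t ^ k * (1 / Real.log t)
        = ∫ t in a₀..x, t ^ k * (1 / Real.log t) :=
      intervalIntegral.integral_add_adjacent_intervals
        ((tk_intble hk₁ hk₂ one_lt_two (le_of_lt h2a)).symm)
        (tk_intble hk₁ hk₂ one_lt_two hx2)
    rw [intervalIntegral.integral_symm] at h1
    rw [hcov] at h1
    linarith
  -- unfold Efun at the three points
  have hEx : piCount x m n = Efun m n r x + r * Mint x := by simp [Efun]
  have hExk : piCount (x ^ (k+1)) m n = Efun m n r (x ^ (k+1)) + r * Mint (x ^ (k+1)) := by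
    simp [Efun]
  rw [habel, hsplit, hdecomp, hpull, hibp, hS, hEx, hExk]
  ring

omit hk₁ hk₂ in
lemma rpow_pred_mul {t : ℝ} (ht : t ≠ 0) (a : ℝ) : t ^ (a - 1) * t = t ^ a := by
  conv_rhs => rw [show a = (a - 1) + 1 by ring, Real.rpow_add_one ht]

set_option maxHeartbeats 1000000 in
lemma stmt2_aux (m n : ℕ) (r c : ℝ) (hc : 0 < c)
    (C₁ : ℝ) (hC₁ : 0 ≤ C₁) (T₀ : ℝ) (hT₀3 : 3 ≤ T₀)
    (hbound : ∀ t : ℝ, T₀ ≤ t →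
      |Efun m n r t| ≤ C₁ * (t * Real.exp (-c * Real.sqrt (Real.log t)))) :
    (fun x : ℝ => piPow k x m n - piCount (x ^ (k+1)) m n) =O[atTop]
      fun x : ℝ => x ^ (k+1) * Real.exp (-c * Real.sqrt ((k+1) * Real.log x)) := by
  have hk1 : (0:ℝ) < k + 1 := by linarith
  have hkne : -k > 0 := by linarith
  have h2a : (2:ℝ) < (2:ℝ) ^ ((1:ℝ)/(k+1)) := two_lt_a0 hk₁ hk₂
  set K₀ : ℝ := ∫ t in (2:ℝ)..((2:ℝ) ^ ((1:ℝ)/(k+1))), t ^ k * (1 / Real.log t) with hK₀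
  set Cab : ℝ := ∫ t in (1:ℝ)..2, (k * t ^ (k - 1)) * piCount t m n with hCab
  set A : ℝ := ∫ t in (2:ℝ)..T₀, (k * t ^ (k - 1)) * Efun m n r t with hA
  rw [Asymptotics.isBigO_iff]
  refine ⟨2 * C₁ + 2 * (|k| * C₁ / (k+1)) + (|Cab| + |r * K₀| + |A|), ?_⟩
  have hev1 : ∀ᶠ x : ℝ in atTop, (2:ℝ) ^ ((1:ℝ)/(k+1)) ≤ x :=
    eventually_ge_atTop _
  have hev2 : ∀ᶠ x : ℝ in atTop, T₀ ≤ x := eventually_ge_atTop T₀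
  have hev3 : ∀ᶠ x : ℝ in atTop, T₀ ≤ x ^ (k+1) :=
    (tendsto_rpow_atTop hk1).eventually_ge_atTop T₀
  have hev4 : ∀ᶠ x : ℝ in atTop, (max (c^2) ((c/(-k))^2)) / (k+1) ≤ Real.log x :=
    Real.tendsto_log_atTop.eventually_ge_atTop _
  filter_upwards [hev1, hev2, hev3, hev4] with x hx1 hx2 hx3 hx4
  have hx0 : (0:ℝ) < x := by linarith
  have hx1' : (1:ℝ) ≤ x := by linarith
  have hlogx : (0:ℝ) ≤ Real.log x := Real.log_nonneg hx1'
  have hu0 : (0:ℝ) ≤ (k+1) * Real.log x := by positivity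
  have humax : max (c^2) ((c/(-k))^2) ≤ (k+1) * Real.log x := by
    have := (div_le_iff₀ hk1).mp hx4; linarith [this]
  have hu1 : c^2 ≤ (k+1) * Real.log x := le_trans (le_max_left _ _) humax
  have hu2 : (c/(-k))^2 ≤ (k+1) * Real.log x := le_trans (le_max_right _ _) humax
  have hsu0 : (0:ℝ) ≤ Real.sqrt ((k+1) * Real.log x) := Real.sqrt_nonneg _
  have hsusu : Real.sqrt ((k+1) * Real.log x) * Real.sqrt ((k+1) * Real.log x)
      = (k+1) * Real.log x := Real.mul_self_sqrt hu0
  have hcsu : c ≤ Real.sqrt ((k+1) * Real.log x) := by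
    calc c = Real.sqrt (c^2) := (Real.sqrt_sq hc.le).symm
      _ ≤ _ := Real.sqrt_le_sqrt hu1
  have hcsu2 : c ≤ (-k) * Real.sqrt ((k+1) * Real.log x) := by
    have h1 : c / (-k) ≤ Real.sqrt ((k+1) * Real.log x) := by
      calc c / (-k) = Real.sqrt ((c/(-k))^2) := (Real.sqrt_sq (by positivity)).symm
        _ ≤ _ := Real.sqrt_le_sqrt hu2
    have h2 : c ≤ Real.sqrt ((k+1) * Real.log x) * (-k) := (div_le_iff₀ hkne).mp h1
    linarith
  have hw0 : (0:ℝ) < Real.exp (-c * Real.sqrt ((k+1) * Real.log x)) := Real.exp_pos _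
  have hxk10 : (0:ℝ) < x ^ (k+1) := Real.rpow_pos_of_pos hx0 _
  have hR0 : (0:ℝ) < x ^ (k+1) * Real.exp (-c * Real.sqrt ((k+1) * Real.log x)) :=
    mul_pos hxk10 hw0
  have hRexp : x ^ (k+1) * Real.exp (-c * Real.sqrt ((k+1) * Real.log x))
      = Real.exp (Real.log x * (k+1) + (-c * Real.sqrt ((k+1) * Real.log x))) := by
    rw [Real.rpow_def_of_pos hx0, ← Real.exp_add]
  have hR1 : (1:ℝ) ≤ x ^ (k+1) * Real.exp (-c * Real.sqrt ((k+1) * Real.log x)) := by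
    rw [hRexp]
    refine Real.one_le_exp ?_
    nlinarith [mul_le_mul_of_nonneg_right hcsu hsu0]
  -- the key comparison for the middle range
  have hmiddle : x ^ ((k+1) * (k+1)) ≤ x ^ (k+1) * Real.exp (-c * Real.sqrt ((k+1) * Real.log x)) := by
    rw [hRexp, Real.rpow_def_of_pos hx0]
    refine Real.exp_le_exp.mpr ?_
    nlinarith [mul_le_mul_of_nonneg_right hcsu2 hsu0]
  have hy0 : (0:ℝ) < x ^ (k+1) := hxk10
  have hyx : x ^ (k+1) ≤ x := by
    calc x ^ (k+1) ≤ x ^ (1:ℝ) := Real.rpow_le_rpow_of_exponent_le hx1' (by linarith)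
      _ = x := Real.rpow_one x
  have h2T : (2:ℝ) ≤ T₀ := by linarith
  have hTy : T₀ ≤ x ^ (k+1) := hx3
  have hlogy : Real.log (x ^ (k+1)) = (k+1) * Real.log x := Real.log_rpow hx0 _
  -- term 1
  have hterm1 : |x ^ k * Efun m n r x|
      ≤ C₁ * (x ^ (k+1) * Real.exp (-c * Real.sqrt ((k+1) * Real.log x))) := by
    have hEx := hbound x hx2
    have hxk0 : (0:ℝ) ≤ x ^ k := Real.rpow_nonneg hx0.le k
    have he1w : Real.exp (-c * Real.sqrt (Real.log x))
        ≤ Real.exp (-c * Real.sqrt ((k+1) * Real.log x)) := by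
      refine Real.exp_le_exp.mpr ?_
      have hsle : Real.sqrt ((k+1) * Real.log x) ≤ Real.sqrt (Real.log x) :=
        Real.sqrt_le_sqrt (by nlinarith [mul_nonpos_of_nonpos_of_nonneg (le_of_lt hk₂) hlogx])
      nlinarith [mul_le_mul_of_nonneg_left hsle hc.le]
    calc |x ^ k * Efun m n r x| = x ^ k * |Efun m n r x| := by
          rw [abs_mul, abs_of_nonneg hxk0]
      _ ≤ x ^ k * (C₁ * (x * Real.exp (-c * Real.sqrt (Real.log x)))) :=
          mul_le_mul_of_nonneg_left hEx hxk0
      _ = C₁ * ((x ^ ((k+1) - 1) * x) * Real.exp (-c * Real.sqrt (Real.log x))) := by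
          rw [show (k+1) - 1 = k by ring]; ring
      _ = C₁ * (x ^ (k+1) * Real.exp (-c * Real.sqrt (Real.log x))) := by
          rw [rpow_pred_mul (ne_of_gt hx0)]
      _ ≤ C₁ * (x ^ (k+1) * Real.exp (-c * Real.sqrt ((k+1) * Real.log x))) := by
          refine mul_le_mul_of_nonneg_left (mul_le_mul_of_nonneg_left he1w hxk10.le) hC₁
  -- term 3
  have hterm3 : |Efun m n r (x ^ (k+1))|
      ≤ C₁ * (x ^ (k+1) * Real.exp (-c * Real.sqrt ((k+1) * Real.log x))) := by
    have := hbound (x ^ (k+1)) hx3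
    rwa [hlogy] at this
  -- pointwise bound utility
  have hptw : ∀ t : ℝ, T₀ ≤ t →
      ‖(k * t ^ (k - 1)) * Efun m n r t‖
        ≤ (|k| * C₁) * (t ^ k * Real.exp (-c * Real.sqrt (Real.log t))) := by
    intro t ht
    have ht0 : (0:ℝ) < t := by linarith
    have htk0 : (0:ℝ) ≤ t ^ (k-1) := Real.rpow_nonneg ht0.le _
    have hEt := hbound t ht
    calc ‖(k * t ^ (k - 1)) * Efun m n r t‖
        = (|k| * t ^ (k-1)) * |Efun m n r t| := by
          rw [Real.norm_eq_abs, abs_mul, abs_mul, abs_of_nonneg htk0]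
      _ ≤ (|k| * t ^ (k-1)) * (C₁ * (t * Real.exp (-c * Real.sqrt (Real.log t)))) :=
          mul_le_mul_of_nonneg_left hEt (by positivity)
      _ = (|k| * C₁) * ((t ^ (k-1) * t) * Real.exp (-c * Real.sqrt (Real.log t))) := by ring
      _ = (|k| * C₁) * (t ^ k * Real.exp (-c * Real.sqrt (Real.log t))) := by
          rw [rpow_pred_mul (ne_of_gt ht0)]
  -- integrability and splitting
  have hi1 : IntervalIntegrable (fun t : ℝ => (k * t ^ (k - 1)) * Efun m n r t)
      MeasureTheory.volume 2 T₀ := fE_intble hk₁ hk₂ m n r le_rfl h2T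
  have hi2 : IntervalIntegrable (fun t : ℝ => (k * t ^ (k - 1)) * Efun m n r t)
      MeasureTheory.volume T₀ (x ^ (k+1)) := fE_intble hk₁ hk₂ m n r (by linarith) hTy
  have hi3 : IntervalIntegrable (fun t : ℝ => (k * t ^ (k - 1)) * Efun m n r t)
      MeasureTheory.volume (x ^ (k+1)) x := fE_intble hk₁ hk₂ m n r (by linarith) hyx
  have hIsplit : (∫ t in (2:ℝ)..x, (k * t ^ (k - 1)) * Efun m n r t)
      = A + (∫ t in T₀..(x ^ (k+1)), (k * t ^ (k - 1)) * Efun m n r t)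
        + ∫ t in (x ^ (k+1))..x, (k * t ^ (k - 1)) * Efun m n r t := by
    rw [← intervalIntegral.integral_add_adjacent_intervals (hi1.trans hi2) hi3,
      ← intervalIntegral.integral_add_adjacent_intervals hi1 hi2, hA]
  -- bound on the middle piece
  have hB : |∫ t in T₀..(x ^ (k+1)), (k * t ^ (k - 1)) * Efun m n r t|
      ≤ (|k| * C₁ / (k+1)) * (x ^ (k+1) * Real.exp (-c * Real.sqrt ((k+1) * Real.log x))) := by
    have hgint : IntervalIntegrable (fun t : ℝ => (|k| * C₁) * t ^ k)
        MeasureTheory.volume T₀ (x ^ (k+1)) := by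
      refine ContinuousOn.intervalIntegrable ?_
      rw [Set.uIcc_of_le hTy]
      exact continuousOn_const.mul (fun t ht => (Real.continuousAt_rpow_const t k
        (Or.inl (by nlinarith [ht.1] : t ≠ 0))).continuousWithinAt)
    have hae : ∀ᵐ t ∂(MeasureTheory.volume.restrict (Set.uIoc T₀ (x ^ (k+1)))),
        ‖(k * t ^ (k - 1)) * Efun m n r t‖ ≤ (|k| * C₁) * t ^ k := by
      rw [Set.uIoc_of_le hTy, MeasureTheory.ae_restrict_iff' measurableSet_Ioc]
      refine MeasureTheory.ae_of_all _ fun t ht => ?_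
      have ht1 : T₀ ≤ t := le_of_lt ht.1
      have ht0 : (0:ℝ) < t := by linarith
      have hexp1 : Real.exp (-c * Real.sqrt (Real.log t)) ≤ 1 :=
        Real.exp_le_one_iff.mpr (by nlinarith [Real.sqrt_nonneg (Real.log t), hc.le])
      calc ‖(k * t ^ (k - 1)) * Efun m n r t‖
          ≤ (|k| * C₁) * (t ^ k * Real.exp (-c * Real.sqrt (Real.log t))) := hptw t ht1
        _ ≤ (|k| * C₁) * (t ^ k * 1) := mul_le_mul_of_nonneg_left
            (mul_le_mul_of_nonneg_left hexp1 (Real.rpow_nonneg ht0.le k)) (by positivity)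
        _ = (|k| * C₁) * t ^ k := by ring
    have h1 := intervalIntegral.norm_integral_le_abs_of_norm_le hae hgint
    rw [Real.norm_eq_abs] at h1
    refine h1.trans ?_
    have h2 : (∫ t in T₀..(x ^ (k+1)), (|k| * C₁) * t ^ k)
        = (|k| * C₁) * ((x ^ ((k+1)*(k+1)) - T₀ ^ (k+1)) / (k+1)) := by
      rw [intervalIntegral.integral_const_mul, integral_rpow (Or.inl hk₁),
        ← Real.rpow_mul hx0.le]
    have hT0k : (0:ℝ) ≤ T₀ ^ (k+1) := Real.rpow_nonneg (by linarith) _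
    have hXT : T₀ ^ (k+1) ≤ x ^ ((k+1)*(k+1)) := by
      rw [Real.rpow_mul hx0.le]
      exact Real.rpow_le_rpow (by linarith) hTy hk1.le
    rw [h2, abs_of_nonneg (mul_nonneg (by positivity)
      (div_nonneg (by linarith) hk1.le))]
    rw [show |k| * C₁ / (k+1) * (x ^ (k+1) * Real.exp (-c * Real.sqrt ((k+1) * Real.log x)))
      = (|k| * C₁) * ((x ^ (k+1) * Real.exp (-c * Real.sqrt ((k+1) * Real.log x))) / (k+1))
      from by ring]
    refine mul_le_mul_of_nonneg_left ?_ (by positivity)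
    exact (div_le_div_iff_of_pos_right hk1).mpr (by linarith)
  -- bound on the top piece
  have hCc : |∫ t in (x ^ (k+1))..x, (k * t ^ (k - 1)) * Efun m n r t|
      ≤ (|k| * C₁ / (k+1)) * (x ^ (k+1) * Real.exp (-c * Real.sqrt ((k+1) * Real.log x))) := by
    have h2y : (2:ℝ) ≤ x ^ (k+1) := by linarith
    have hgint : IntervalIntegrable
        (fun t : ℝ => ((|k| * C₁) * Real.exp (-c * Real.sqrt ((k+1) * Real.log x))) * t ^ k)
        MeasureTheory.volume (x ^ (k+1)) x := by
      refine ContinuousOn.intervalIntegrable ?_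
      rw [Set.uIcc_of_le hyx]
      exact continuousOn_const.mul (fun t ht => (Real.continuousAt_rpow_const t k
        (Or.inl (by nlinarith [ht.1] : t ≠ 0))).continuousWithinAt)
    have hae : ∀ᵐ t ∂(MeasureTheory.volume.restrict (Set.uIoc (x ^ (k+1)) x)),
        ‖(k * t ^ (k - 1)) * Efun m n r t‖
          ≤ ((|k| * C₁) * Real.exp (-c * Real.sqrt ((k+1) * Real.log x))) * t ^ k := by
      rw [Set.uIoc_of_le hyx, MeasureTheory.ae_restrict_iff' measurableSet_Ioc]
      refine MeasureTheory.ae_of_all _ fun t ht => ?_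
      have ht1 : T₀ ≤ t := le_trans hTy (le_of_lt ht.1)
      have ht0 : (0:ℝ) < t := by linarith
      have hltu : (k+1) * Real.log x ≤ Real.log t := by
        have := Real.log_le_log hy0 (le_of_lt ht.1)
        rwa [hlogy] at this
      have hexp1 : Real.exp (-c * Real.sqrt (Real.log t))
          ≤ Real.exp (-c * Real.sqrt ((k+1) * Real.log x)) := by
        refine Real.exp_le_exp.mpr ?_
        have hsle := Real.sqrt_le_sqrt hltu
        nlinarith [mul_le_mul_of_nonneg_left hsle hc.le]
      calc ‖(k * t ^ (k - 1)) * Efun m n r t‖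
          ≤ (|k| * C₁) * (t ^ k * Real.exp (-c * Real.sqrt (Real.log t))) := hptw t ht1
        _ ≤ (|k| * C₁) * (t ^ k * Real.exp (-c * Real.sqrt ((k+1) * Real.log x))) :=
            mul_le_mul_of_nonneg_left
              (mul_le_mul_of_nonneg_left hexp1 (Real.rpow_nonneg ht0.le k)) (by positivity)
        _ = ((|k| * C₁) * Real.exp (-c * Real.sqrt ((k+1) * Real.log x))) * t ^ k := by ring
    have h1 := intervalIntegral.norm_integral_le_abs_of_norm_le hae hgint
    rw [Real.norm_eq_abs] at h1
    refine h1.trans ?_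
    have h2 : (∫ t in (x ^ (k+1))..x, ((|k| * C₁) * Real.exp (-c * Real.sqrt ((k+1) * Real.log x))) * t ^ k)
        = ((|k| * C₁) * Real.exp (-c * Real.sqrt ((k+1) * Real.log x)))
            * ((x ^ (k+1) - x ^ ((k+1)*(k+1))) / (k+1)) := by
      rw [intervalIntegral.integral_const_mul, integral_rpow (Or.inl hk₁),
        ← Real.rpow_mul hx0.le]
    have hY0 : (0:ℝ) ≤ x ^ ((k+1)*(k+1)) := Real.rpow_nonneg hx0.le _
    have hYle : x ^ ((k+1)*(k+1)) ≤ x ^ (k+1) := by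
      rw [Real.rpow_mul hx0.le]
      exact Real.rpow_le_rpow hy0.le hyx hk1.le
    have hkC : (0:ℝ) ≤ |k| * C₁ := mul_nonneg (abs_nonneg k) hC₁
    rw [h2, abs_of_nonneg (mul_nonneg (mul_nonneg hkC (Real.exp_pos _).le)
      (div_nonneg (by linarith) hk1.le))]
    rw [show |k| * C₁ / (k+1) * (x ^ (k+1) * Real.exp (-c * Real.sqrt ((k+1) * Real.log x)))
      = ((|k| * C₁) * Real.exp (-c * Real.sqrt ((k+1) * Real.log x))) * (x ^ (k+1) / (k+1))
      from by ring]
    exact mul_le_mul_of_nonneg_left ((div_le_div_iff_of_pos_right hk1).mpr (by linarith))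
      (mul_nonneg hkC (Real.exp_pos _).le)
  -- assembly
  rw [Real.norm_eq_abs, Real.norm_eq_abs, main_id hk₁ hk₂ m n r x hx1, ← hCab, ← hK₀, hIsplit,
    abs_of_pos hR0]
  have hA1 : |A| ≤ |A| * (x ^ (k+1) * Real.exp (-c * Real.sqrt ((k+1) * Real.log x))) := by
    exact le_mul_of_one_le_right (abs_nonneg A) hR1
  have hCab1 : |Cab| ≤ |Cab| * (x ^ (k+1) * Real.exp (-c * Real.sqrt ((k+1) * Real.log x))) := by
    exact le_mul_of_one_le_right (abs_nonneg Cab) hR1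
  have hK1 : |r * K₀| ≤ |r * K₀| * (x ^ (k+1) * Real.exp (-c * Real.sqrt ((k+1) * Real.log x))) := by
    exact le_mul_of_one_le_right (abs_nonneg (r * K₀)) hR1
  set IB := ∫ t in T₀..(x ^ (k+1)), (k * t ^ (k - 1)) * Efun m n r t with hIB
  set IC := ∫ t in (x ^ (k+1))..x, (k * t ^ (k - 1)) * Efun m n r t with hIC
  have habs : |x ^ k * Efun m n r x - (A + IB + IC) - Efun m n r (x ^ (k+1)) - Cab + r * K₀|
      ≤ |x ^ k * Efun m n r x| + (|A| + |IB| + |IC|) + |Efun m n r (x ^ (k+1))| + |Cab|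
        + |r * K₀| := by
    have t1 := abs_add_le (x ^ k * Efun m n r x - (A + IB + IC) - Efun m n r (x ^ (k+1)) - Cab) (r * K₀)
    have t2 := abs_sub (x ^ k * Efun m n r x - (A + IB + IC) - Efun m n r (x ^ (k+1))) Cab
    have t3 := abs_sub (x ^ k * Efun m n r x - (A + IB + IC)) (Efun m n r (x ^ (k+1)))
    have t4 := abs_sub (x ^ k * Efun m n r x) (A + IB + IC)
    have t5 := abs_add_le (A + IB) IC
    have t6 := abs_add_le A IB
    linarith
  calc |x ^ k * Efun m n r x - (A + IB + IC) - Efun m n r (x ^ (k+1)) - Cab + r * K₀|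
      ≤ |x ^ k * Efun m n r x| + (|A| + |IB| + |IC|) + |Efun m n r (x ^ (k+1))| + |Cab|
        + |r * K₀| := habs
    _ ≤ C₁ * (x ^ (k+1) * Real.exp (-c * Real.sqrt ((k+1) * Real.log x)))
        + (|A| * (x ^ (k+1) * Real.exp (-c * Real.sqrt ((k+1) * Real.log x)))
          + (|k| * C₁ / (k+1)) * (x ^ (k+1) * Real.exp (-c * Real.sqrt ((k+1) * Real.log x)))
          + (|k| * C₁ / (k+1)) * (x ^ (k+1) * Real.exp (-c * Real.sqrt ((k+1) * Real.log x))))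
        + C₁ * (x ^ (k+1) * Real.exp (-c * Real.sqrt ((k+1) * Real.log x)))
        + |Cab| * (x ^ (k+1) * Real.exp (-c * Real.sqrt ((k+1) * Real.log x)))
        + |r * K₀| * (x ^ (k+1) * Real.exp (-c * Real.sqrt ((k+1) * Real.log x))) := by
        linarith [hterm1, hterm3, hB, hCc, hA1, hCab1, hK1]
    _ = (2 * C₁ + 2 * (|k| * C₁ / (k+1)) + (|Cab| + |r * K₀| + |A|))
        * (x ^ (k+1) * Real.exp (-c * Real.sqrt ((k+1) * Real.log x))) := by ring

end kfix
end aux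

theorem stmt_2 (k : ℝ) (hk₁ : -1 < k) (hk₂ : k < 0) (m n : ℕ) (hm : 0 < m) (hn : 0 < n)
    (hmn : Nat.Coprime m n) (α : ℝ) (hα : 0 < α)
    (hPNT : (fun x => piCount x m n - (1 / (Nat.totient m : ℝ)) * ∫ t in (2:ℝ)..x, 1 / Real.log t)
        =O[atTop] fun x => x * Real.exp (-(α / 2) * Real.sqrt (Real.log x))) :
    (fun x : ℝ => piPow k x m n - piCount (x ^ (k + 1)) m n)
      =O[atTop] fun x => x ^ (k + 1) * Real.exp (-(α / 2) * Real.sqrt ((k + 1) * Real.log x)) := by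
  have hc : 0 < α / 2 := by linarith
  obtain ⟨C, hC⟩ := Asymptotics.isBigO_iff.mp hPNT
  rw [Filter.eventually_atTop] at hC
  obtain ⟨T₁, hT₁⟩ := hC
  have hbound : ∀ t : ℝ, max T₁ 3 ≤ t →
      |Efun m n (1 / (Nat.totient m : ℝ)) t|
        ≤ |C| * (t * Real.exp (-(α / 2) * Real.sqrt (Real.log t))) := by
    intro t ht
    have h3 : (3:ℝ) ≤ t := le_trans (le_max_right _ _) ht
    have h1 := hT₁ t (le_trans (le_max_left _ _) ht)
    rw [Real.norm_eq_abs, Real.norm_eq_abs,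
      abs_of_nonneg (mul_nonneg (by linarith : (0:ℝ) ≤ t) (Real.exp_pos _).le)] at h1
    have h2 : Efun m n (1 / (Nat.totient m : ℝ)) t
        = piCount t m n - (1 / (Nat.totient m : ℝ)) * ∫ u in (2:ℝ)..t, 1 / Real.log u := rfl
    rw [h2]
    exact h1.trans (mul_le_mul_of_nonneg_right (le_abs_self C)
      (mul_nonneg (by linarith) (Real.exp_pos _).le))
  exact stmt2_aux hk₁ hk₂ m n _ (α / 2) hc |C| (abs_nonneg C) (max T₁ 3)
    (le_max_right _ _) hbound
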